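/- Fix an integer L ≥ 2 and consider the recursion λ_{t+1} = λ_t − η λ_t^{2L−1} + η λ_t^{L−1}. Let λ_0 > 0, set M = max{1, λ_0}, and suppose 0 < η < min{ 1/L, 2/((2L−1) M^{2L−2}) }. Then λ_t converges to 1 as t → ∞. -/

import Mathlib

/-- For the depth-`L` shared-eigenvalue gradient-descent recursion
`λ_{t+1} = λ_t − η λ_t^{2L−1} + η λ_t^{L−1}` with `λ_0 > 0`, `M = max {1, λ_0}` and
`0 < η < min {1/L, 2/((2L−1) M^{2L−2})}`, the iterates converge to `1`. -/
theorem statement11 (L : ℕ) (hL : 2 ≤ L) (η M : ℝ) (lam : ℕ → ℝ)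
    (hrec : ∀ t, lam (t + 1) = lam t - η * lam t ^ (2 * L - 1) + η * lam t ^ (L - 1))
    (hlam0 : 0 < lam 0) (hM : M = max 1 (lam 0))
    (hη0 : 0 < η)
    (hη : η < min (1 / (L : ℝ)) (2 / ((2 * (L : ℝ) - 1) * M ^ (2 * L - 2)))) :
    Filter.Tendsto lam Filter.atTop (nhds 1) := by
  obtain ⟨hη1, hη2⟩ := lt_min_iff.mp hη
  have hLr2 : (2:ℝ) ≤ (L:ℝ) := by exact_mod_cast hL
  have hLr0 : (0:ℝ) < (L:ℝ) := by linarith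
  have hM1 : (1:ℝ) ≤ M := by rw [hM]; exact le_max_left _ _
  have hM0 : lam 0 ≤ M := by rw [hM]; exact le_max_right _ _
  have hMpow : (0:ℝ) < M ^ (2*L-2) := pow_pos (by linarith) _
  set c : ℝ := 2*(L:ℝ) - 1 with hc
  have hc3 : (3:ℝ) ≤ c := by simp only [hc]; linarith
  have hc0 : (0:ℝ) < c := by linarith
  -- clear denominators in the step-size hypotheses
  have hηL : η * (L:ℝ) < 1 := by
    rw [lt_div_iff₀ hLr0] at hη1; linarith
  have hη2' : η * (c * M ^ (2*L-2)) < 2 := by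
    rw [lt_div_iff₀ (by positivity)] at hη2; linarith
  set g : ℝ → ℝ := fun x => x^(L-1) * ∑ i ∈ Finset.range L, x^i with hg
  -- key factorization
  have key : ∀ x : ℝ, x - η * x^(2*L-1) + η * x^(L-1) - 1 = (x-1)*(1 - η * g x) := by
    intro x
    have h1 : x^(L-1) * x^L = x^(2*L-1) := by rw [← pow_add]; congr 1; omega
    have h2 : (∑ i ∈ Finset.range L, x ^ i) * (x - 1) = x ^ L - 1 := geom_sum_mul x L
    have h3 : (x-1)*(1 - η * g x)
        = (x-1) - η * (x^(L-1) * ((∑ i ∈ Finset.range L, x^i) * (x-1))) := by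
      simp only [hg]; ring
    rw [h3, h2, mul_sub, h1]; ring
  -- monotonicity and positivity of g
  have hgmono : ∀ x y : ℝ, 0 ≤ x → x ≤ y → g x ≤ g y := by
    intro x y hx hxy
    have hy : (0:ℝ) ≤ y := le_trans hx hxy
    refine mul_le_mul (pow_le_pow_left₀ hx hxy _)
      (Finset.sum_le_sum fun i _ => pow_le_pow_left₀ hx hxy i)
      (Finset.sum_nonneg fun i _ => pow_nonneg hx i) (pow_nonneg hy _)
  have hgnn : ∀ x : ℝ, 0 ≤ x → 0 ≤ g x := by
    intro x hx
    exact mul_nonneg (pow_nonneg hx _) (Finset.sum_nonneg fun i _ => pow_nonneg hx i)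
  have hgpos : ∀ x : ℝ, 0 < x → 0 < g x := by
    intro x hx
    refine mul_pos (pow_pos hx _) (Finset.sum_pos (fun i _ => pow_pos hx i) ?_)
    exact Finset.nonempty_range_iff.mpr (by omega)
  have hg1 : g 1 = (L:ℝ) := by simp [hg]
  have hgM : g M ≤ (L:ℝ) * M ^ (2*L-2) := by
    have h1 : ∑ i ∈ Finset.range L, M^i ≤ (L:ℝ) * M^(L-1) := by
      calc ∑ i ∈ Finset.range L, M^i ≤ ∑ _i ∈ Finset.range L, M^(L-1) :=
            Finset.sum_le_sum fun i hi =>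
              pow_le_pow_right₀ hM1 (by have := Finset.mem_range.mp hi; omega)
        _ = (L:ℝ) * M^(L-1) := by simp [mul_comm]
    calc g M ≤ M^(L-1) * ((L:ℝ) * M^(L-1)) :=
          mul_le_mul_of_nonneg_left h1 (pow_nonneg (by linarith) _)
      _ = (L:ℝ) * M^(2*L-2) := by
          rw [show 2*L-2 = (L-1)+(L-1) by omega, pow_add]; ring
  -- bound η g M ≤ 1 + 1/c
  have hηgM : η * g M ≤ 1 + 1/c := by
    have h1 : η * g M ≤ η * ((L:ℝ) * M^(2*L-2)) := mul_le_mul_of_nonneg_left hgM hη0.le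
    have h1' := mul_le_mul_of_nonneg_right h1 hc0.le
    have h2 : (L:ℝ) * (η * (c * M^(2*L-2))) ≤ (L:ℝ) * 2 :=
      mul_le_mul_of_nonneg_left hη2'.le (by linarith)
    have hcc : 1 + 1/c = (c+1)/c := by field_simp
    rw [hcc, le_div_iff₀ hc0]
    have hc1 : c + 1 = 2 * (L:ℝ) := by rw [hc]; ring
    nlinarith [h1', h2]
  clear hg
  clear_value g
  -- the invariant interval [m, M]
  set a : ℝ := (2*(L:ℝ) - 3)/c with ha
  have ha0 : 0 < a := div_pos (by linarith) hc0
  set m : ℝ := min (lam 0) a with hm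
  have hm0 : 0 < m := lt_min hlam0 ha0
  have hma : m ≤ a := min_le_right _ _
  have hinv : ∀ t, m ≤ lam t ∧ lam t ≤ M := by
    intro t
    induction t with
    | zero => exact ⟨min_le_left _ _, hM0⟩
    | succ t ih =>
      obtain ⟨h1, h2⟩ := ih
      set x := lam t with hx
      have hx0 : 0 < x := lt_of_lt_of_le hm0 h1
      have hkey : lam (t+1) - 1 = (x - 1) * (1 - η * g x) := by
        rw [hrec t]; exact key x
      rcases le_or_gt x 1 with hx1 | hx1
      · -- x ≤ 1 : x ≤ lam(t+1) ≤ 1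
        have hgx1 : g x ≤ (L:ℝ) := hg1 ▸ hgmono x 1 hx0.le hx1
        have hgx0 : 0 ≤ g x := hgnn x hx0.le
        have hgη : 0 ≤ η * g x := mul_nonneg hη0.le hgx0
        have hgη1 : η * g x ≤ η * (L:ℝ) := mul_le_mul_of_nonneg_left hgx1 hη0.le
        have hf1 : 0 < 1 - η * g x := by linarith
        constructor
        · have hprod : 0 ≤ (1 - x) * (η * g x) := mul_nonneg (by linarith) hgη
          have heq : (x-1)*(1 - η * g x) = (x-1) + (1-x)*(η * g x) := by ring
          have : x - 1 ≤ lam (t+1) - 1 := by rw [hkey, heq]; linarith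
          linarith
        · have hprod : 0 ≤ (1 - x) * (1 - η * g x) := mul_nonneg (by linarith) hf1.le
          have heq : (x-1)*(1 - η * g x) = -((1-x)*(1 - η * g x)) := by ring
          have : lam (t+1) - 1 ≤ 0 := by rw [hkey, heq]; linarith
          linarith
      · -- 1 < x : a ≤ lam(t+1) ≤ x ≤ M
        have hgx0 : 0 ≤ g x := hgnn x hx0.le
        constructor
        · -- lower bound via lam(t+1) ≥ x (1 - η x^(2L-2))
          have hp1 : x^(2*L-1) = x^(2*L-2) * x := by rw [← pow_succ]; congr 1; omega
          have hp2 : x^(2*L-2) ≤ M^(2*L-2) := pow_le_pow_left₀ hx0.le h2 _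
          have e1 : c * (η * x^(2*L-2)) ≤ c * (η * M^(2*L-2)) :=
            mul_le_mul_of_nonneg_left (mul_le_mul_of_nonneg_left hp2 hη0.le) hc0.le
          have hp4 : c * (η * x^(2*L-2)) < 2 := by
            have e2 : η * (c * M^(2*L-2)) = c * (η * M^(2*L-2)) := by ring
            rw [e2] at hη2'
            linarith
          have e3 : c * (η * x^(2*L-2)) * x ≤ 2 * x :=
            mul_le_mul_of_nonneg_right hp4.le (by linarith)
          have e4 : 0 ≤ c * (η * x^(L-1)) :=
            mul_nonneg hc0.le (mul_nonneg hη0.le (pow_nonneg hx0.le _))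
          have e5 : (c-2) * 1 ≤ (c-2) * x :=
            mul_le_mul_of_nonneg_left hx1.le (by linarith)
          have hrw : lam (t+1) = x - η * (x^(2*L-2) * x) + η * x^(L-1) := by
            rw [hrec t, ← hx, hp1]
          have heq : c * (x - η * (x^(2*L-2) * x) + η * x^(L-1))
              = c*x - c * (η * x^(2*L-2)) * x + c * (η * x^(L-1)) := by ring
          have hlow : c - 2 ≤ c * lam (t+1) := by rw [hrw, heq]; linarith
          have hca : c * a = c - 2 := by rw [ha]; field_simp; ring
          have : a ≤ lam (t+1) := by
            rw [← mul_le_mul_iff_of_pos_left hc0, hca]; linarith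
          linarith
        · have hprod : 0 ≤ (x - 1) * (η * g x) :=
            mul_nonneg (by linarith) (mul_nonneg hη0.le hgx0)
          have heq : (x-1)*(1 - η * g x) = (x-1) - (x-1)*(η * g x) := by ring
          have : lam (t+1) - 1 ≤ x - 1 := by rw [hkey, heq]; linarith
          linarith
  -- contraction factor
  set q : ℝ := max (1 - η * g m) (1/c) with hq
  have hq0 : 0 ≤ q := le_trans (by positivity) (le_max_right _ _)
  have hq1 : q < 1 := by
    apply max_lt
    · have := mul_pos hη0 (hgpos m hm0); linarith
    · rw [div_lt_one hc0]; linarith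
  have hstep : ∀ t, |lam (t+1) - 1| ≤ q * |lam t - 1| := by
    intro t
    obtain ⟨h1, h2⟩ := hinv t
    have hx0 : (0:ℝ) ≤ lam t := le_of_lt (lt_of_lt_of_le hm0 h1)
    have hkey : lam (t+1) - 1 = (lam t - 1) * (1 - η * g (lam t)) := by
      rw [hrec t]; exact key (lam t)
    have habs : |1 - η * g (lam t)| ≤ q := by
      rw [abs_le]
      constructor
      · have hgle : η * g (lam t) ≤ η * g M :=
          mul_le_mul_of_nonneg_left (hgmono _ _ hx0 h2) hη0.le
        have h3 : -(1/c) ≤ 1 - η * g (lam t) := by linarith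
        have h4 : -q ≤ -(1/c) := neg_le_neg (le_max_right _ _)
        linarith
      · have hgge : η * g m ≤ η * g (lam t) :=
          mul_le_mul_of_nonneg_left (hgmono _ _ hm0.le h1) hη0.le
        exact le_trans (by linarith) (le_max_left (1 - η * g m) (1/c))
    calc |lam (t+1) - 1| = |lam t - 1| * |1 - η * g (lam t)| := by rw [hkey, abs_mul]
      _ ≤ |lam t - 1| * q := mul_le_mul_of_nonneg_left habs (abs_nonneg _)
      _ = q * |lam t - 1| := mul_comm _ _
  have hbound : ∀ t, |lam t - 1| ≤ q^t * |lam 0 - 1| := by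
    intro t
    induction t with
    | zero => simp
    | succ t ih =>
      calc |lam (t+1) - 1| ≤ q * |lam t - 1| := hstep t
        _ ≤ q * (q^t * |lam 0 - 1|) := mul_le_mul_of_nonneg_left ih hq0
        _ = q^(t+1) * |lam 0 - 1| := by ring
  have hq_tendsto : Filter.Tendsto (fun t => q^t * |lam 0 - 1|) Filter.atTop (nhds 0) := by
    have := (tendsto_pow_atTop_nhds_zero_of_lt_one hq0 hq1).mul_const (|lam 0 - 1|)
    simpa using this
  have habs_tendsto : Filter.Tendsto (fun t => |lam t - 1|) Filter.atTop (nhds 0) :=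
    squeeze_zero (fun t => abs_nonneg _) hbound hq_tendsto
  have hsub : Filter.Tendsto (fun t => lam t - 1) Filter.atTop (nhds 0) :=
    tendsto_zero_iff_abs_tendsto_zero _ |>.mpr habs_tendsto
  have := hsub.add_const 1
  simpa using this
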